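/- Let (E, ≤, ε) be a heap with pieces in P and concurrency relation 𝒞, and suppose the concurrency subgraph of E contains no circuits (i.e. is acyclic). Then the following are equivalent: (i) E is ranked; (ii) every subinterval of E is ranked; (iii) every minimal balanced subinterval of E is ranked. -/

import Mathlib

/-- `ρ` is a rank function for the poset `E`:
it increases by exactly 1 along covering relations. -/
def IsRankFunction {E : Type*} [PartialOrder E] (ρ : E → ℤ) : Prop :=
  ∀ a b : E, a ⋖ b → ρ b = ρ a + 1

/-- A poset is ranked if it admits a rank function. -/
def Ranked (E : Type*) [PartialOrder E] : Prop :=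
  ∃ ρ : E → ℤ, IsRankFunction ρ

/-- Two elements lie in the same connected component of the poset: the
equivalence relation generated by the covering relation. -/
def SameComponent {E : Type*} [PartialOrder E] (a b : E) : Prop :=
  Relation.EqvGen (fun x y : E => x ⋖ y) a b

/-- The heap axioms for a labelling `ε : E → P` of a poset `E` with
concurrency relation `C` on the pieces `P`. -/
def IsHeap {E P : Type*} [PartialOrder E] (C : P → P → Prop) (ε : E → P) : Prop :=
  (∀ α β : E, C (ε α) (ε β) → α ≤ β ∨ β ≤ α) ∧
  (∀ α β : E, α ≤ β ↔ Relation.TransGen (fun x y : E => x ≤ y ∧ C (ε x) (ε y)) α β)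

/-- `[a, b]` is a minimal balanced subinterval: `a ≠ b`, `ε a = ε b`, and the
only elements of `[a, b]` with label `ε a` are `a` and `b`. -/
def MinBalanced {E P : Type*} [PartialOrder E] (ε : E → P) (a b : E) : Prop :=
  a < b ∧ ε a = ε b ∧ ∀ c ∈ Set.Icc a b, ε c = ε a → c = a ∨ c = b

/-- The set `S_{[a,b]}` of elements of `[a, b]` whose label is distinct from,
but concurrent with, the label of `a`. -/
def intervalS {E P : Type*} [PartialOrder E] (C : P → P → Prop) (ε : E → P)
    (a b : E) : Set E :=
  {c | c ∈ Set.Icc a b ∧ ε c ≠ ε a ∧ C (ε a) (ε c)}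

/-- The concurrency subgraph of the heap (the simple graph on the labels
occurring in `E`, with distinct labels adjacent iff concurrent) is acyclic. -/
def NoCircuits {E P : Type*} [PartialOrder E] (C : P → P → Prop) (ε : E → P) : Prop :=
  (SimpleGraph.fromRel (fun v w : Set.range ε => C v.1 w.1)).IsAcyclic

section Aux
variable {E P : Type*} [PartialOrder E] {C : P → P → Prop} {ε : E → P}

lemma heap_step (hheap : IsHeap C ε) {x y : E}
    (h : Relation.TransGen (fun u w : E => u ≤ w ∧ C (ε u) (ε w)) x y) :
    x = y ∨ ∃ z, x ≤ z ∧ z ≠ y ∧ z ≤ y ∧ C (ε z) (ε y) := by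
  induction h with
  | single h1 =>
    rename_i b
    by_cases hxb : x = b
    · exact Or.inl hxb
    · exact Or.inr ⟨x, le_rfl, hxb, h1.1, h1.2⟩
  | tail h1 h2 ih =>
    rename_i b c
    by_cases hbc : b = c
    · subst hbc; exact ih
    · exact Or.inr ⟨b, (hheap.2 x b).mpr h1, hbc, h2.1, h2.2⟩

lemma heap_cov_concurrent (hheap : IsHeap C ε) {x y : E} (h : x ⋖ y) :
    C (ε x) (ε y) := by
  rcases heap_step hheap ((hheap.2 x y).mp h.le) with rfl | ⟨z, hxz, hne, hzy, hC⟩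
  · exact absurd rfl h.ne
  · rcases hxz.lt_or_eq with hlt | heq
    · exact absurd (lt_of_le_of_ne hzy hne) (h.2 hlt)
    · subst heq; exact hC

lemma covBy_coe {S : Set E} {x y : E} (hx : x ∈ S) (hy : y ∈ S) (h : x ⋖ y) :
    (⟨x, hx⟩ : S) ⋖ ⟨y, hy⟩ := by
  refine ⟨Subtype.mk_lt_mk.mpr h.1, fun c hc1 hc2 => ?_⟩
  exact h.2 (show x < (c : E) from hc1) (show (c : E) < y from hc2)

lemma icc_covBy {a b : E} {x y : ↥(Set.Icc a b)} (h : x ⋖ y) : (x : E) ⋖ (y : E) := by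
  refine ⟨h.1, fun c hc1 hc2 => ?_⟩
  have hc : c ∈ Set.Icc a b := ⟨le_trans x.2.1 hc1.le, le_trans hc2.le y.2.2⟩
  exact h.2 (show x < (⟨c, hc⟩ : Set.Icc a b) from hc1) hc2

lemma exists_cov_chain [Finite E] :
    ∀ y x : E, x ≤ y →
      Relation.ReflTransGen (fun p q : E => p ⋖ q ∧ x ≤ p ∧ q ≤ y) x y := by
  intro y
  induction y using WellFoundedLT.induction with
  | _ y ih =>
    intro x hxy
    rcases hxy.lt_or_eq with hlt | rfl
    · obtain ⟨z, hxz, hzy⟩ := exists_le_covBy_of_lt hlt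
      exact (Relation.ReflTransGen.mono (fun p q hpq =>
        ⟨hpq.1, hpq.2.1, hpq.2.2.trans hzy.1.le⟩) _ _ (ih z hzy.1 x hxz)).tail ⟨hzy, hxz, le_rfl⟩
    · exact .refl

omit [PartialOrder E] in
lemma rank_diff_const {R : E → E → Prop} {f g : E → ℤ}
    (hf : ∀ p q, R p q → f q = f p + 1) (hg : ∀ p q, R p q → g q = g p + 1)
    {x y : E} (h : Relation.ReflTransGen R x y) : f y - g y = f x - g x := by
  induction h with
  | refl => rfl
  | tail h1 h2 ih => rw [hf _ _ h2, hg _ _ h2]; omega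

end Aux

lemma ranked_of_minBalanced {E P : Type*} [PartialOrder E] [Finite E]
    {C : P → P → Prop} (hrefl : Reflexive C) (hsymm : Symmetric C)
    {ε : E → P} (hheap : IsHeap C ε)
    (hacyclic : (SimpleGraph.fromRel (fun v w : Set.range ε => C v.1 w.1)).IsAcyclic)
    (hmin : ∀ a b : E, a < b → ε a = ε b →
      (∀ c ∈ Set.Icc a b, ε c = ε a → c = a ∨ c = b) →
      ∃ ρ : ↥(Set.Icc a b) → ℤ, ∀ p q : ↥(Set.Icc a b), p ⋖ q → ρ q = ρ p + 1) :
    ∃ ρ : E → ℤ, ∀ x y : E, x ⋖ y → ρ y = ρ x + 1 := by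
  classical
  have _inst := Fintype.ofFinite E
  suffices h : ∀ n (s : Finset E), s.card = n → IsLowerSet (↑s : Set E) →
      ∃ ρ : E → ℤ, ∀ x ∈ s, ∀ y ∈ s, x ⋖ y → ρ y = ρ x + 1 by
    obtain ⟨ρ, hρ⟩ := h _ Finset.univ rfl (by intro a b _ _; exact Finset.mem_univ b)
    exact ⟨ρ, fun x y hxy => hρ x (Finset.mem_univ x) y (Finset.mem_univ y) hxy⟩
  intro n
  induction n using Nat.strong_induction_on with
  | _ n ih =>
  intro s hcard hls
  rcases s.eq_empty_or_nonempty with rfl | hne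
  · exact ⟨0, by simp⟩
  obtain ⟨m, hm, hmax⟩ := s.exists_maximal hne
  replace hmax : ∀ x ∈ s, ¬ m < x := fun x hx hlt => lt_irrefl m (lt_of_lt_of_le hlt (hmax hx hlt.le))
  set v := ε m with hv
  have hs'ls : IsLowerSet (↑(s.erase m) : Set E) := by
    intro p q hqp hp
    simp only [Finset.coe_erase, Set.mem_diff, Finset.mem_coe,
      Set.mem_singleton_iff] at hp ⊢
    refine ⟨hls hqp hp.1, ?_⟩
    rintro rfl
    rcases hqp.lt_or_eq with hlt | heq
    · exact hmax p hp.1 hlt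
    · exact hp.2 heq.symm
  have hcard' : (s.erase m).card < n := hcard ▸ Finset.card_erase_lt_of_mem hm
  obtain ⟨ρ', hρ'⟩ := ih _ hcard' (s.erase m) rfl hs'ls
  have hmem' : ∀ p : E, p < m → p ∈ s.erase m := fun p hp =>
    Finset.mem_erase.mpr ⟨hp.ne, hls hp.le hm⟩
  by_cases hL : ∃ y, y ⋖ m
  case neg =>
    refine ⟨ρ', fun x hx y hy hxy => ?_⟩
    have hxm : x ≠ m := fun h => hmax y hy (h ▸ hxy.lt)
    have hym : y ≠ m := fun h => hL ⟨x, h ▸ hxy⟩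
    exact hρ' x (Finset.mem_erase.mpr ⟨hxm, hx⟩) y (Finset.mem_erase.mpr ⟨hym, hy⟩) hxy
  case pos =>
  have hcovC : ∀ y, y ⋖ m → C v (ε y) := fun y hy => hsymm (heap_cov_concurrent hheap hy)
  by_cases hvx : ∃ x, x < m ∧ ε x = v
  · -- Case B : there is an element with label v strictly below m
    obtain ⟨x0, hx0⟩ := hvx
    set T : Finset E := s.filter (fun x => x < m ∧ ε x = v) with hT
    have hTne : T.Nonempty := ⟨x0, Finset.mem_filter.mpr ⟨hls hx0.1.le hm, hx0⟩⟩
    obtain ⟨a, haT, hamax⟩ := T.exists_maximal hTne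
    replace hamax : ∀ x ∈ T, ¬ a < x := fun x hx hlt => lt_irrefl a (lt_of_lt_of_le hlt (hamax hx hlt.le))
    rw [hT, Finset.mem_filter] at haT
    have ham : a < m := haT.2.1
    have hav : ε a = v := haT.2.2
    have hmb : ∀ c ∈ Set.Icc a m, ε c = ε a → c = a ∨ c = m := by
      intro c hc hcl
      rcases hc.2.lt_or_eq with hlt | heq
      · left
        have hcT : c ∈ T := Finset.mem_filter.mpr
          ⟨hls hlt.le hm, hlt, hcl.trans hav⟩
        rcases hc.1.lt_or_eq with h2 | h2
        · exact absurd h2 (hamax c hcT)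
        · exact h2.symm
      · right; exact heq
    obtain ⟨σ₀, hσ₀⟩ := hmin a m ham (hav.trans hv) hmb
    set σ : E → ℤ := fun x => if h : x ∈ Set.Icc a m then σ₀ ⟨x, h⟩ else 0 with hσdef
    have hσ : ∀ p q : E, p ∈ Set.Icc a m → q ∈ Set.Icc a m → p ⋖ q → σ q = σ p + 1 := by
      intro p q hp hq hpq
      simp only [hσdef, dif_pos hp, dif_pos hq]
      exact hσ₀ _ _ (covBy_coe hp hq hpq)
    have hcovle : ∀ y, y ⋖ m → a ≤ y := by
      intro y hy
      rcases hheap.1 a y (hav ▸ hcovC y hy) with h | h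
      · exact h
      · rcases h.lt_or_eq with hlt | heq
        · exact absurd ham (hy.2 hlt)
        · exact heq.ge
    have hconst : ∀ y, y ⋖ m → σ y - ρ' y = σ a - ρ' a := by
      intro y hy
      refine rank_diff_const ?_ ?_ (exists_cov_chain y a (hcovle y hy))
      · intro p q hpq
        exact hσ p q ⟨hpq.2.1, (hpq.1.le.trans hpq.2.2).trans hy.le⟩
          ⟨hpq.2.1.trans hpq.1.le, hpq.2.2.trans hy.le⟩ hpq.1
      · intro p q hpq
        exact hρ' p (hmem' p (lt_of_le_of_lt (hpq.1.le.trans hpq.2.2) hy.lt))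
          q (hmem' q (lt_of_le_of_lt hpq.2.2 hy.lt)) hpq.1
    refine ⟨fun x => if x = m then σ m - (σ a - ρ' a) else ρ' x, ?_⟩
    intro x hx y hy hxy
    by_cases hym : y = m
    · rw [hym] at hxy
      have hxm : x ≠ m := hxy.lt.ne
      simp only [if_pos hym, if_neg hxm]
      have h1 : σ m = σ x + 1 :=
        hσ x m ⟨hcovle x hxy, hxy.le⟩ ⟨ham.le, le_rfl⟩ hxy
      have h2 := hconst x hxy
      omega
    · have hxm : x ≠ m := fun h => hmax y hy (h ▸ hxy.lt)
      simp only [if_neg hym, if_neg hxm]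
      exact hρ' x (Finset.mem_erase.mpr ⟨hxm, hx⟩) y (Finset.mem_erase.mpr ⟨hym, hy⟩) hxy
  · -- Case C : no element with label v strictly below m
    have hvnot : ∀ p, p ∈ s.erase m → ε p ≠ v := by
      intro p hp hpv
      rw [Finset.mem_erase] at hp
      have hC : C (ε p) (ε m) := by rw [hpv, hv]; exact hrefl (ε m)
      rcases hheap.1 p m hC with h | h
      · exact hvx ⟨p, h.lt_of_ne hp.1, hpv⟩
      · exact hmax p hp.2 (h.lt_of_ne (Ne.symm hp.1))
    have hRcsymm : ∀ p q : E,
        ((p ⋖ q ∨ q ⋖ p) ∧ p ∈ s.erase m ∧ q ∈ s.erase m) →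
        ((q ⋖ p ∨ p ⋖ q) ∧ q ∈ s.erase m ∧ p ∈ s.erase m) :=
      fun p q h => ⟨h.1.symm, h.2.2, h.2.1⟩
    have hConnsymm : ∀ p q : E,
        Relation.ReflTransGen (fun p q : E => (p ⋖ q ∨ q ⋖ p) ∧ p ∈ s.erase m ∧ q ∈ s.erase m) p q →
        Relation.ReflTransGen (fun p q : E => (p ⋖ q ∨ q ⋖ p) ∧ p ∈ s.erase m ∧ q ∈ s.erase m) q p := by
      intro p q h
      induction h with
      | refl => exact .refl
      | tail h1 h2 ih => exact Relation.ReflTransGen.head (hRcsymm _ _ h2) ih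
    have walkify : ∀ p q : E,
        Relation.ReflTransGen (fun p q : E => (p ⋖ q ∨ q ⋖ p) ∧ p ∈ s.erase m ∧ q ∈ s.erase m) p q →
        p ∈ s.erase m →
        ∃ w : (SimpleGraph.fromRel (fun v w : Set.range ε => C v.1 w.1)).Walk
            ⟨ε p, Set.mem_range_self p⟩ ⟨ε q, Set.mem_range_self q⟩,
          ∀ u ∈ w.support, u.1 ≠ v := by
      intro p q h hp
      induction h with
      | refl =>
        refine ⟨SimpleGraph.Walk.nil, ?_⟩
        intro u hu
        rw [SimpleGraph.Walk.support_nil, List.mem_singleton] at hu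
        subst hu
        exact hvnot p hp
      | tail h1 h2 ih =>
        rename_i b c
        obtain ⟨w, hw⟩ := ih
        have hCbc : C (ε b) (ε c) := by
          rcases h2.1 with h | h
          · exact heap_cov_concurrent hheap h
          · exact hsymm (heap_cov_concurrent hheap h)
        by_cases heq : ε b = ε c
        · refine ⟨w.copy rfl (Subtype.ext heq), ?_⟩
          intro u hu
          rw [SimpleGraph.Walk.support_copy] at hu
          exact hw u hu
        · have hadj : (SimpleGraph.fromRel (fun v w : Set.range ε => C v.1 w.1)).Adj
              ⟨ε b, Set.mem_range_self b⟩ ⟨ε c, Set.mem_range_self c⟩ := by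
            rw [SimpleGraph.fromRel_adj]
            exact ⟨fun hh => heq (congrArg Subtype.val hh), Or.inl hCbc⟩
          refine ⟨w.concat hadj, ?_⟩
          intro u hu
          rw [SimpleGraph.Walk.support_concat, List.mem_append] at hu
          rcases hu with hu | hu
          · exact hw u hu
          · rw [List.mem_singleton] at hu
            subst hu
            exact hvnot c h2.2.2
    have huniq : ∀ y z : E, y ⋖ m → z ⋖ m →
        Relation.ReflTransGen (fun p q : E => (p ⋖ q ∨ q ⋖ p) ∧ p ∈ s.erase m ∧ q ∈ s.erase m) y z →
        y = z := by
      intro y z hy hz hconn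
      by_contra hne
      have hys : y ∈ s.erase m := hmem' y hy.lt
      have hzs : z ∈ s.erase m := hmem' z hz.lt
      have hinc1 : ¬ y ≤ z := fun h => hy.2 (h.lt_of_ne hne) hz.lt
      have hinc2 : ¬ z ≤ y := fun h => hz.2 (h.lt_of_ne (Ne.symm hne)) hy.lt
      have hεne : ε y ≠ ε z := by
        intro h
        rcases hheap.1 y z (by rw [h]; exact hrefl (ε z)) with hc | hc
        · exact hinc1 hc
        · exact hinc2 hc
      have hyv : ε y ≠ v := hvnot y hys
      have hzv : ε z ≠ v := hvnot z hzs
      obtain ⟨w, hw⟩ := walkify y z hconn hys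
      have hvr : v ∈ Set.range ε := ⟨m, hv.symm⟩
      have hadj1 : (SimpleGraph.fromRel (fun v w : Set.range ε => C v.1 w.1)).Adj
          ⟨ε y, Set.mem_range_self y⟩ ⟨v, hvr⟩ := by
        rw [SimpleGraph.fromRel_adj]
        exact ⟨fun hh => hyv (congrArg Subtype.val hh), Or.inr (hcovC y hy)⟩
      have hadj2 : (SimpleGraph.fromRel (fun v w : Set.range ε => C v.1 w.1)).Adj
          ⟨v, hvr⟩ ⟨ε z, Set.mem_range_self z⟩ := by
        rw [SimpleGraph.fromRel_adj]
        exact ⟨fun hh => hzv (congrArg Subtype.val hh).symm, Or.inl (hcovC z hz)⟩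
      have hw2path : (SimpleGraph.Walk.cons hadj1
          (SimpleGraph.Walk.cons hadj2 SimpleGraph.Walk.nil)).IsPath := by
        rw [SimpleGraph.Walk.isPath_def]
        simp only [SimpleGraph.Walk.support_cons, SimpleGraph.Walk.support_nil,
          List.nodup_cons, List.mem_cons, List.mem_singleton, List.not_mem_nil,
          List.nodup_nil, and_true, not_or]
        refine ⟨⟨?_, ?_⟩, ?_⟩
        · intro hh; rw [Subtype.mk.injEq] at hh; exact hyv hh
        · refine ⟨?_, not_false⟩
          intro hh; rw [Subtype.mk.injEq] at hh; exact hεne hh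
        · refine ⟨⟨?_, not_false⟩, not_false⟩
          intro hh; rw [Subtype.mk.injEq] at hh; exact hzv hh.symm
      rw [SimpleGraph.isAcyclic_iff_path_unique] at hacyclic
      have hpeq := hacyclic ⟨_, hw2path⟩ w.toPath
      have hveq : (SimpleGraph.Walk.cons hadj1 (SimpleGraph.Walk.cons hadj2 SimpleGraph.Walk.nil))
          = (w.toPath : (SimpleGraph.fromRel (fun v w : Set.range ε => C v.1 w.1)).Walk _ _) :=
        congrArg Subtype.val hpeq
      have hvmem : (⟨v, hvr⟩ : Set.range ε) ∈ (SimpleGraph.Walk.cons hadj1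
          (SimpleGraph.Walk.cons hadj2 SimpleGraph.Walk.nil)).support := by
        simp [SimpleGraph.Walk.support_cons]
      rw [hveq] at hvmem
      exact hw _ (SimpleGraph.Walk.support_toPath_subset w hvmem) rfl
    obtain ⟨y₀, hy₀⟩ := hL
    set csh : E → ℤ := fun x =>
      if h : ∃ y, y ⋖ m ∧ Relation.ReflTransGen
          (fun p q : E => (p ⋖ q ∨ q ⋖ p) ∧ p ∈ s.erase m ∧ q ∈ s.erase m) x y
      then ρ' y₀ - ρ' h.choose else 0 with hcsh
    have hcstep : ∀ p q : E, ((p ⋖ q ∨ q ⋖ p) ∧ p ∈ s.erase m ∧ q ∈ s.erase m) →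
        csh p = csh q := by
      intro p q hpq
      have hpq' : Relation.ReflTransGen
          (fun p q : E => (p ⋖ q ∨ q ⋖ p) ∧ p ∈ s.erase m ∧ q ∈ s.erase m) p q :=
        Relation.ReflTransGen.single hpq
      have hqp' : Relation.ReflTransGen
          (fun p q : E => (p ⋖ q ∨ q ⋖ p) ∧ p ∈ s.erase m ∧ q ∈ s.erase m) q p :=
        Relation.ReflTransGen.single (hRcsymm _ _ hpq)
      by_cases h1 : ∃ y, y ⋖ m ∧ Relation.ReflTransGen
          (fun p q : E => (p ⋖ q ∨ q ⋖ p) ∧ p ∈ s.erase m ∧ q ∈ s.erase m) p y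
      · have h2 : ∃ y, y ⋖ m ∧ Relation.ReflTransGen
            (fun p q : E => (p ⋖ q ∨ q ⋖ p) ∧ p ∈ s.erase m ∧ q ∈ s.erase m) q y :=
          ⟨h1.choose, h1.choose_spec.1, hqp'.trans h1.choose_spec.2⟩
        simp only [hcsh, dif_pos h1, dif_pos h2]
        have heq : h1.choose = h2.choose :=
          huniq _ _ h1.choose_spec.1 h2.choose_spec.1
            ((hConnsymm _ _ h1.choose_spec.2).trans (hpq'.trans h2.choose_spec.2))
        rw [heq]
      · have h2 : ¬ ∃ y, y ⋖ m ∧ Relation.ReflTransGen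
            (fun p q : E => (p ⋖ q ∨ q ⋖ p) ∧ p ∈ s.erase m ∧ q ∈ s.erase m) q y :=
          fun h2 => h1 ⟨h2.choose, h2.choose_spec.1, hpq'.trans h2.choose_spec.2⟩
        simp only [hcsh, dif_neg h1, dif_neg h2]
    have hccov : ∀ y, y ⋖ m → ρ' y + csh y = ρ' y₀ := by
      intro y hy
      have h1 : ∃ y', y' ⋖ m ∧ Relation.ReflTransGen
          (fun p q : E => (p ⋖ q ∨ q ⋖ p) ∧ p ∈ s.erase m ∧ q ∈ s.erase m) y y' :=
        ⟨y, hy, .refl⟩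
      simp only [hcsh, dif_pos h1]
      have hcy : h1.choose = y :=
        huniq _ _ h1.choose_spec.1 hy (hConnsymm _ _ h1.choose_spec.2)
      rw [hcy]; ring
    refine ⟨fun x => if x = m then ρ' y₀ + 1 else ρ' x + csh x, ?_⟩
    intro x hx y hy hxy
    by_cases hym : y = m
    · rw [hym] at hxy
      have hxm : x ≠ m := hxy.lt.ne
      simp only [if_pos hym, if_neg hxm]
      rw [hccov x hxy]
    · have hxm : x ≠ m := fun h => hmax y hy (h ▸ hxy.lt)
      simp only [if_neg hym, if_neg hxm]
      have hxs : x ∈ s.erase m := Finset.mem_erase.mpr ⟨hxm, hx⟩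
      have hys : y ∈ s.erase m := Finset.mem_erase.mpr ⟨hym, hy⟩
      have h1 := hρ' x hxs y hys hxy
      have h2 := hcstep x y ⟨Or.inl hxy, hxs, hys⟩
      omega

/-- Theorem 2.1.1: for a heap whose concurrency subgraph contains no circuits,
the following are equivalent: (i) E is ranked; (ii) every subinterval of E is
ranked; (iii) every minimal balanced subinterval of E is ranked. -/
theorem ranked_tfae_of_noCircuits {E P : Type*} [PartialOrder E] [Finite E]
    (C : P → P → Prop) (hrefl : Reflexive C) (hsymm : Symmetric C)
    (ε : E → P) (hheap : IsHeap C ε) (hacyclic : NoCircuits C ε) :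
    List.TFAE [Ranked E,
      ∀ a b : E, a ≤ b → Ranked (Set.Icc a b),
      ∀ a b : E, MinBalanced ε a b → Ranked (Set.Icc a b)] := by
  tfae_have 1 → 2 := by
    rintro ⟨ρ, hρ⟩ a b _
    exact ⟨fun x => ρ x, fun p q hpq => hρ p q (icc_covBy hpq)⟩
  tfae_have 2 → 3 := by
    intro h a b hmb
    exact h a b hmb.1.le
  tfae_have 3 → 1 := by
    intro h
    exact ranked_of_minBalanced hrefl hsymm hheap hacyclic
      (fun a b h1 h2 h3 => h a b ⟨h1, h2, h3⟩)
  tfae_finish
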